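/- Let g : ℝ → [0,1] be measurable and integrable, t > 0 fixed, and for each integer p ≥ 2 define v_p(x) = g(x)·((p-1)·t·g(x)^{p-1} + 1)^{-1/(p-1)}. Then v_p converges to g pointwise a.e. and in L^1(ℝ) as p → ∞ (on the set where g ≤ 1). -/

import Mathlib

open MeasureTheory Filter

theorem stmt_14 (g : ℝ → ℝ) (hgint : Integrable g) (hgmeas : Measurable g)
    (hg0 : ∀ x, 0 ≤ g x) (hg1 : ∀ x, g x ≤ 1) (t : ℝ) (ht : 0 < t)
    (v : ℕ → ℝ → ℝ)
    (hv : ∀ p : ℕ, ∀ x : ℝ, v p x =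
      g x * (((p : ℝ) - 1) * t * g x ^ ((p : ℝ) - 1) + 1) ^ (-(1 / ((p : ℝ) - 1)))) :
    (∀ᵐ x : ℝ, Tendsto (fun p : ℕ => v p x) atTop (nhds (g x))) ∧
    Tendsto (fun p : ℕ => ∫ x : ℝ, |v p x - g x|) atTop (nhds 0) := by
  have ht' : t ≠ 0 := ne_of_gt ht
  set L : ℕ → ℝ := fun p => (((p : ℝ) - 1) * t + 1) ^ (-(1 / ((p : ℝ) - 1))) with hLdef
  -- log (e*t+1) / e → 0
  have hlog : Tendsto (fun e : ℝ => Real.log (e * t + 1) / e) atTop (nhds 0) := by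
    have h1 := Real.tendsto_pow_log_div_mul_add_atTop (1 / t) (-(1 / t)) 1
      (one_div_ne_zero ht')
    have h2 : Tendsto (fun e : ℝ => e * t + 1) atTop atTop :=
      tendsto_atTop_add_const_right _ 1 (Tendsto.atTop_mul_const ht tendsto_id)
    have h3 := h1.comp h2
    refine h3.congr fun e => ?_
    simp only [Function.comp_apply, pow_one]
    congr 1
    field_simp
    ring
  -- main limit lemma for L
  have hL : Tendsto L atTop (nhds 1) := by
    have hexp : Tendsto (fun e : ℝ => Real.exp (-(Real.log (e * t + 1) / e))) atTop
        (nhds 1) := by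
      have := (Real.continuous_exp.tendsto 0).comp (neg_zero (G := ℝ) ▸ hlog.neg)
      simpa [Function.comp_def] using this
    have hf : Tendsto (fun e : ℝ => (e * t + 1) ^ (-(1 / e))) atTop (nhds 1) := by
      refine hexp.congr' ?_
      filter_upwards [eventually_ge_atTop (1 : ℝ)] with e he
      have hpos : (0 : ℝ) < e * t + 1 := by nlinarith
      rw [Real.rpow_def_of_pos hpos]
      congr 1
      ring
    have hcast : Tendsto (fun p : ℕ => (p : ℝ) - 1) atTop atTop :=
      tendsto_atTop_add_const_right _ (-1) tendsto_natCast_atTop_atTop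
    exact hf.comp hcast
  -- pointwise bounds for p ≥ 2
  have key : ∀ x : ℝ, ∀ p : ℕ, 2 ≤ p → g x * L p ≤ v p x ∧ v p x ≤ g x := by
    intro x p hp
    set e : ℝ := (p : ℝ) - 1 with hedef
    have he : (1 : ℝ) ≤ e := by
      have : (2 : ℝ) ≤ (p : ℝ) := by exact_mod_cast hp
      simp only [hedef]; linarith
    have hB0 : 0 ≤ g x ^ e := Real.rpow_nonneg (hg0 x) _
    have hB1 : g x ^ e ≤ 1 := Real.rpow_le_one (hg0 x) (hg1 x) (by linarith)
    have het : 0 ≤ e * t := by positivity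
    have hBge1 : (1 : ℝ) ≤ e * t * g x ^ e + 1 := by nlinarith [mul_nonneg het hB0]
    have hBpos : (0 : ℝ) < e * t * g x ^ e + 1 := by linarith
    have hBle : e * t * g x ^ e + 1 ≤ e * t + 1 := by
      nlinarith [mul_nonneg het (sub_nonneg.mpr hB1)]
    have hz : -(1 / e) ≤ 0 := neg_nonpos.mpr (by positivity)
    have hfac_le_one : (e * t * g x ^ e + 1) ^ (-(1 / e)) ≤ 1 :=
      Real.rpow_le_one_of_one_le_of_nonpos hBge1 hz
    have hfac_ge : (e * t + 1) ^ (-(1 / e)) ≤ (e * t * g x ^ e + 1) ^ (-(1 / e)) :=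
      Real.rpow_le_rpow_of_nonpos hBpos hBle hz
    rw [hv p x]
    constructor
    · exact mul_le_mul_of_nonneg_left hfac_ge (hg0 x)
    · exact mul_le_of_le_one_right (hg0 x) hfac_le_one
  have hvnonneg : ∀ x : ℝ, ∀ p : ℕ, 2 ≤ p → 0 ≤ v p x := by
    intro x p hp
    rw [hv p x]
    have : (2 : ℝ) ≤ (p : ℝ) := by exact_mod_cast hp
    have hB0 : 0 ≤ g x ^ ((p : ℝ) - 1) := Real.rpow_nonneg (hg0 x) _
    have het : 0 ≤ ((p : ℝ) - 1) * t := by nlinarith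
    have hBpos : (0 : ℝ) < ((p : ℝ) - 1) * t * g x ^ ((p : ℝ) - 1) + 1 := by
      nlinarith [mul_nonneg het hB0]
    exact mul_nonneg (hg0 x) (Real.rpow_nonneg hBpos.le _)
  -- pointwise convergence
  have hpw : ∀ x : ℝ, Tendsto (fun p : ℕ => v p x) atTop (nhds (g x)) := by
    intro x
    have hlower : Tendsto (fun p : ℕ => g x * L p) atTop (nhds (g x)) := by
      have := hL.const_mul (g x)
      simpa only [mul_one] using this
    refine tendsto_of_tendsto_of_tendsto_of_le_of_le' hlower tendsto_const_nhds ?_ ?_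
    · filter_upwards [eventually_ge_atTop 2] with p hp using (key x p hp).1
    · filter_upwards [eventually_ge_atTop 2] with p hp using (key x p hp).2
  refine ⟨Eventually.of_forall hpw, ?_⟩
  -- L¹ convergence
  have hvmeas : ∀ p : ℕ, 2 ≤ p → Measurable (v p) := by
    intro p hp
    have hp2 : (2 : ℝ) ≤ (p : ℝ) := by exact_mod_cast hp
    have he0 : (0 : ℝ) ≤ (p : ℝ) - 1 := by linarith
    have het : 0 ≤ ((p : ℝ) - 1) * t := by positivity
    have hform : v p = fun x => g x * Real.exp (Real.log
        (((p : ℝ) - 1) * t * g x ^ ((p : ℝ) - 1) + 1) * (-(1 / ((p : ℝ) - 1)))) := by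
      funext x
      have hB0 : 0 ≤ g x ^ ((p : ℝ) - 1) := Real.rpow_nonneg (hg0 x) _
      have hBpos : (0 : ℝ) < ((p : ℝ) - 1) * t * g x ^ ((p : ℝ) - 1) + 1 := by
        nlinarith [mul_nonneg het hB0]
      rw [hv p x, Real.rpow_def_of_pos hBpos]
    rw [hform]
    have hin : Measurable fun x => g x ^ ((p : ℝ) - 1) :=
      (Real.continuous_rpow_const he0).measurable.comp hgmeas
    exact hgmeas.mul ((((hin.const_mul _).add_const _).log.mul_const _).exp)
  have hvint : ∀ p : ℕ, 2 ≤ p → Integrable (v p) := by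
    intro p hp
    refine hgint.mono (hvmeas p hp).aestronglyMeasurable (Eventually.of_forall fun x => ?_)
    rw [Real.norm_eq_abs, Real.norm_eq_abs, abs_of_nonneg (hvnonneg x p hp),
      abs_of_nonneg (hg0 x)]
    exact (key x p hp).2
  have hupper : Tendsto (fun p : ℕ => (1 - L p) * ∫ x : ℝ, g x) atTop (nhds 0) := by
    have h1 : Tendsto (fun p : ℕ => 1 - L p) atTop (nhds 0) := by
      have := Tendsto.sub (tendsto_const_nhds (x := (1 : ℝ)) (f := (atTop : Filter ℕ))) hL
      simpa using this
    simpa using h1.mul_const (∫ x : ℝ, g x)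
  refine tendsto_of_tendsto_of_tendsto_of_le_of_le' tendsto_const_nhds hupper ?_ ?_
  · exact Eventually.of_forall fun p => integral_nonneg fun x => abs_nonneg _
  · filter_upwards [eventually_ge_atTop 2] with p hp
    have hbound : ∀ x : ℝ, |v p x - g x| ≤ (1 - L p) * g x := by
      intro x
      have h1 := (key x p hp).1
      have h2 := (key x p hp).2
      rw [abs_sub_comm, abs_of_nonneg (by linarith)]
      nlinarith [hg0 x]
    calc (∫ x : ℝ, |v p x - g x|) ≤ ∫ x : ℝ, (1 - L p) * g x := by
          refine integral_mono ((hvint p hp).sub hgint).abs (hgint.const_mul _) hbound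
      _ = (1 - L p) * ∫ x : ℝ, g x := integral_const_mul _ _
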